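/- Let (W, S) be a Coxeter system, ε an automorphism, J ⊆ S, and (J_n, J'_n, u_n)_{n≥0} ∈ S(J, ε). Then for every n ≥ 0, u_0 u_1 ⋯ u_n is the unique minimal length element of the double coset W_{J'} · w · W_{J_n}, where w = u_0 u_1 ⋯ u_N for any N large enough that u_{N+1} = u_{N+2} = ⋯ = 1. -/

import Mathlib

namespace Lusztig

variable {B : Type*} {W : Type*} [Group W] {M : CoxeterMatrix B}

/-- The standard parabolic subgroup `W_K` generated by the simple reflections in `K`. -/
def WP (cs : CoxeterSystem M W) (K : Set B) : Subgroup W :=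
  Subgroup.closure (cs.simple '' K)

/-- `w` is the unique minimal length element of its left coset `W_K w`
(i.e. `w ∈ ᴷW`). -/
def IsMinL (cs : CoxeterSystem M W) (K : Set B) (w : W) : Prop :=
  ∀ a ∈ WP cs K, a * w ≠ w → cs.length w < cs.length (a * w)

/-- `w` is the unique minimal length element of its right coset `w W_K`
(i.e. `w ∈ Wᴷ`). -/
def IsMinR (cs : CoxeterSystem M W) (K : Set B) (w : W) : Prop :=
  ∀ b ∈ WP cs K, w * b ≠ w → cs.length w < cs.length (w * b)

/-- `x` is the unique minimal length element of its double coset `W_K x W_{K'}`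
(i.e. `x ∈ ᴷWᴷ'`). -/
def IsMinDC (cs : CoxeterSystem M W) (K K' : Set B) (x : W) : Prop :=
  ∀ a ∈ WP cs K, ∀ b ∈ WP cs K', a * x * b ≠ x → cs.length x < cs.length (a * x * b)

/-- `x` is the unique minimal length element of the double coset `W_K g W_{K'}`. -/
def IsMinOf (cs : CoxeterSystem M W) (K K' : Set B) (g x : W) : Prop :=
  (∃ a ∈ WP cs K, ∃ b ∈ WP cs K', x = a * g * b) ∧
  ∀ a ∈ WP cs K, ∀ b ∈ WP cs K', a * g * b ≠ x → cs.length x < cs.length (a * g * b)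

/-- `Ad(x)J ∩ S`, as a set of indices of simple reflections:
the set of `s` with `simple s = x * (simple t) * x⁻¹` for some `t ∈ J`. -/
def AdSet (cs : CoxeterSystem M W) (x : W) (J : Set B) : Set B :=
  {s | ∃ t ∈ J, cs.simple s = x * cs.simple t * x⁻¹}

/-- The product `u 0 * u 1 * ⋯ * u (n-1)`. -/
def pr (u : ℕ → W) (n : ℕ) : W := ((List.range n).map u).prod

/-- Lusztig's set `S(J, ε)` (2.3): sequences `(J_n, J'_n, u_n)` with
`J = J_0 ⊇ J_1 ⊇ ⋯`, `ε(J_n) = ε(J_{n-1}) ∩ Ad(u_0⋯u_{n-1})J_{n-1}` (n ≥ 1),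
`J'_0 = ε(J) = J'`, `J'_n = J_{n-1} ∩ Ad(u_0⋯u_{n-1})⁻¹ε(J_{n-1})` (n ≥ 1),
`u_n ∈ W_{J_{n-1}}` (n ≥ 1), `u_n ∈ {}^{J'_n}W ∩ W^{J_n}` (n ≥ 0).
Here `ε` is encoded by its restriction `f : B ≃ B` to the simple reflections. -/
structure SSeq (cs : CoxeterSystem M W) (f : B ≃ B) (J : Set B) where
  Jn : ℕ → Set B
  J'n : ℕ → Set B
  u : ℕ → W
  hJ0 : Jn 0 = J
  hJ'0 : J'n 0 = f '' J
  hmono : ∀ n, Jn (n + 1) ⊆ Jn n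
  hb : ∀ n, f '' Jn (n + 1) = (f '' Jn n) ∩ AdSet cs (pr u (n + 1)) (Jn n)
  hc : ∀ n, J'n (n + 1) = Jn n ∩ AdSet cs (pr u (n + 1))⁻¹ (f '' Jn n)
  hd : ∀ n, u (n + 1) ∈ WP cs (Jn n)
  he : ∀ n, IsMinL cs (J'n n) (u n) ∧ IsMinR cs (Jn n) (u n)

/-- Lusztig's set `T(J, ε)` (2.2): sequences `(J_n, w_n)` with
`J = J_0 ⊇ J_1 ⊇ ⋯`, `J_n = J_{n-1} ∩ ε⁻¹(Ad(w_{n-1})J_{n-1})` (n ≥ 1),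
`w_n ∈ {}^{ε(J_n)}W^{J_n}` (n ≥ 0), `w_n ∈ W_{ε(J_n)} w_{n-1} W_{J_{n-1}}` (n ≥ 1). -/
structure TSeq (cs : CoxeterSystem M W) (f : B ≃ B) (J : Set B) where
  Jn : ℕ → Set B
  w : ℕ → W
  hJ0 : Jn 0 = J
  hmono : ∀ n, Jn (n + 1) ⊆ Jn n
  hb : ∀ n, Jn (n + 1) = Jn n ∩ f.symm '' AdSet cs (w n) (Jn n)
  hc : ∀ n, IsMinDC cs (f '' Jn n) (Jn n) (w n)
  hd : ∀ n, ∃ a ∈ WP cs (f '' Jn (n + 1)), ∃ b ∈ WP cs (Jn n), w (n + 1) = a * w n * b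

set_option linter.unusedSectionVars false
set_option linter.unusedVariables false
open CoxeterSystem

section Machinery

set_option maxHeartbeats 1000000

open scoped Classical

variable (cs : CoxeterSystem M W)

local prefix:100 "s" => cs.simple
local prefix:100 "π" => cs.wordProd
local prefix:100 "ℓ" => cs.length

/-- Parity count of occurrences of `t` in a list. -/
noncomputable def par (t : W) : List W → ZMod 2
  | [] => 0
  | a :: l => (if a = t then 1 else 0) + par t l

@[simp] lemma par_nil (t : W) : par t ([] : List W) = 0 := rfl

lemma par_cons (t a : W) (l : List W) :
    par t (a :: l) = (if a = t then 1 else 0) + par t l := by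
  simp [par]

lemma two_eq_zero : (1 : ZMod 2) + 1 = 0 := by decide

lemma add_same : ∀ (ε x : ZMod 2), ε + x + x = ε := by decide

lemma par_map_conj (t g : W) (l : List W) :
    par t (l.map (MulAut.conj g)) = par (g⁻¹ * t * g) l := by
  induction l with
  | nil => rfl
  | cons a l ih =>
      rw [List.map_cons, par_cons, par_cons, ih]
      congr 1
      have h : (MulAut.conj g) a = t ↔ a = g⁻¹ * t * g := by
        constructor
        · intro h; rw [← h]; simp [MulAut.conj_apply]; group
        · intro h; rw [h]; simp [MulAut.conj_apply]; group
      by_cases hc : (MulAut.conj g) a = t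
      · rw [if_pos hc, if_pos (h.mp hc)]
      · rw [if_neg hc, if_neg (fun hx => hc (h.mpr hx))]

lemma mem_of_par_ne_zero {t : W} {l : List W} (h : par t l ≠ 0) : t ∈ l := by
  induction l with
  | nil => simp [par] at h
  | cons a l ih =>
      rw [par_cons] at h
      by_cases hat : a = t
      · simp [hat]
      · rw [if_neg hat, zero_add] at h
        exact List.mem_cons_of_mem _ (ih h)

lemma par_eq_zero_of_not_mem {t : W} {l : List W} (h : t ∉ l) : par t l = 0 := by
  by_contra hc
  exact h (mem_of_par_ne_zero hc)

/-- The basic involution used to build the reflection representation on `W × ZMod 2`. -/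
noncomputable def exc (i : B) : Equiv.Perm (W × ZMod 2) :=
  Function.Involutive.toPerm
    (fun p => (s i * p.1 * s i, p.2 + if p.1 = s i then 1 else 0))
    (by
      intro p
      obtain ⟨t, ε⟩ := p
      have h1 : s i * (s i * t * s i) * s i = t := by
        rw [← mul_assoc, ← mul_assoc, cs.simple_mul_simple_self, one_mul,
          mul_assoc, cs.simple_mul_simple_self, mul_one]
      have h2 : (s i * t * s i = s i) ↔ (t = s i) := by
        constructor
        · intro h
          have := congrArg (fun z => s i * z * s i) h
          rw [h1] at this
          rw [this, cs.simple_mul_simple_self, one_mul]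
        · intro h
          rw [h, cs.simple_mul_simple_self, one_mul]
      simp only
      refine Prod.ext h1 ?_
      simp only [h2]
      split_ifs with ht
      · exact add_same ε 1
      · rw [add_zero, add_zero])

lemma exc_apply (i : B) (t : W) (ε : ZMod 2) :
    exc cs i (t, ε) = (s i * t * s i, ε + if t = s i then 1 else 0) := rfl

lemma conj_chain {G : Type*} [Group G] {p a : G} (hip : p⁻¹ * a = a * p) (c : ℕ) (t : G) :
    (p * t * p⁻¹ = a * p ^ c) ↔ (t = a * p ^ (c + 2)) := by
  have h1 : a = p * a * p := by
    rw [mul_assoc, ← hip]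
    group
  have hpa : p * a = a * p⁻¹ := by
    nth_rewrite 2 [h1]
    group
  constructor
  · intro h
    have h2 : t = p⁻¹ * (a * p ^ c) * p := by rw [← h]; group
    rw [h2, show p⁻¹ * (a * p ^ c) * p = (p⁻¹ * a) * p ^ (c + 1) from by group, hip]
    group
  · intro h
    rw [h, show p * (a * p ^ (c + 2)) * p⁻¹ = p * a * p ^ (c + 1) from by group, hpa]
    group

lemma exc_mul_exc_pow (i i' : B) (k : ℕ) (t : W) (ε : ZMod 2) :
    ((exc cs i * exc cs i') ^ k) (t, ε) =
      ((s i * s i') ^ k * t * ((s i * s i') ^ k)⁻¹,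
        ε + ∑ c ∈ Finset.range (2 * k), (if t = s i' * (s i * s i') ^ c then 1 else 0)) := by
  induction k generalizing t ε with
  | zero => simp
  | succ k ih =>
      have hp : ∀ (u : W) (δ : ZMod 2), ((exc cs i * exc cs i')) (u, δ) =
          ((s i * s i') * u * ((s i * s i'))⁻¹,
            δ + ((if u = s i' then 1 else 0) + (if u = s i' * (s i * s i') then 1 else 0))) := by
        intro u δ
        rw [Equiv.Perm.mul_apply, exc_apply, exc_apply]
        congr 1
        · rw [mul_inv_rev, cs.inv_simple, cs.inv_simple]
          group
        · rw [add_assoc]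
          congr 1
          have : (s i' * u * s i' = s i) ↔ (u = s i' * (s i * s i')) := by
            constructor
            · intro h
              have := congrArg (fun z => s i' * z) h
              simp only [← mul_assoc, cs.simple_mul_simple_self, one_mul] at this
              have := congrArg (fun z => z * s i') this
              simpa [mul_assoc, cs.simple_mul_simple_self] using this
            · intro h
              rw [h]
              simp only [← mul_assoc, cs.simple_mul_simple_self, one_mul]
              simp [mul_assoc, cs.simple_mul_simple_self]
          by_cases hc : s i' * u * s i' = s i
          · rw [if_pos hc, if_pos (this.mp hc)]
          · rw [if_neg hc, if_neg (fun hx => hc (this.mpr hx))]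
      rw [pow_succ, Equiv.Perm.mul_apply, hp, ih]
      have key : ∀ c : ℕ,
          ((s i * s i') * t * (s i * s i')⁻¹ = s i' * (s i * s i') ^ c)
            ↔ (t = s i' * (s i * s i') ^ (c + 2)) := by
        intro c
        apply conj_chain
        rw [mul_inv_rev, cs.inv_simple, cs.inv_simple, mul_assoc]
      have hfst : ∀ P p t : W, P * (p * t * p⁻¹) * P⁻¹ = (P * p) * t * (P * p)⁻¹ := by
        intro P p t; group
      refine Prod.ext ?_ ?_
      · simp only
        rw [pow_succ]
        exact hfst _ _ _
      · simp only
        have hre : ∀ c : ℕ,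
            (if (s i * s i') * t * (s i * s i')⁻¹ = s i' * (s i * s i') ^ c then (1 : ZMod 2) else 0)
              = (if t = s i' * (s i * s i') ^ (c + 2) then 1 else 0) := by
          intro c
          by_cases hc : (s i * s i') * t * (s i * s i')⁻¹ = s i' * (s i * s i') ^ c
          · rw [if_pos hc, if_pos ((key c).mp hc)]
          · rw [if_neg hc, if_neg (fun hx => hc ((key c).mpr hx))]
        rw [show (2 * (k + 1)) = 2 * k + 1 + 1 from by ring, Finset.sum_range_succ',
          Finset.sum_range_succ']
        simp only [show ∀ c : ℕ, c + 1 + 1 = c + 2 from fun _ => rfl, Nat.zero_add,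
          pow_zero, mul_one, pow_one]
        rw [Finset.sum_congr rfl (fun c _ => hre c)]
        ring

lemma exc_liftable : M.IsLiftable (fun i => exc cs i) := by
  intro i i'
  ext ⟨t, ε⟩
  · rw [exc_mul_exc_pow, cs.simple_mul_simple_pow]
    simp
  · rw [exc_mul_exc_pow]
    simp only [Equiv.Perm.one_apply]
    have h2 : 2 * M i i' = M i i' + M i i' := by ring
    rw [h2, Finset.sum_range_add]
    have : ∀ c : ℕ, (if t = s i' * (s i * s i') ^ (M i i' + c) then (1 : ZMod 2) else 0)
        = (if t = s i' * (s i * s i') ^ c then 1 else 0) := by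
      intro c
      rw [pow_add, cs.simple_mul_simple_pow, one_mul]
    simp only [this]
    rw [← add_assoc]
    exact add_same ε _

/-- The reflection representation of `W` on `W × ZMod 2`. -/
noncomputable def mu : W →* Equiv.Perm (W × ZMod 2) :=
  cs.lift ⟨fun i => exc cs i, exc_liftable cs⟩

lemma mu_simple (i : B) : mu cs (s i) = exc cs i :=
  cs.lift_apply_simple (exc_liftable cs) i

lemma mu_wordProd (ω : List B) (t : W) (ε : ZMod 2) :
    (mu cs (π ω)⁻¹) (t, ε) = ((π ω)⁻¹ * t * π ω, ε + par t (cs.leftInvSeq ω)) := by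
  induction ω generalizing t ε with
  | nil => simp [leftInvSeq]
  | cons i ω ih =>
      rw [cs.wordProd_cons, mul_inv_rev, cs.inv_simple, map_mul, Equiv.Perm.mul_apply,
        mu_simple, exc_apply, ih, leftInvSeq]
      rw [par_cons, par_map_conj, cs.inv_simple]
      refine Prod.ext ?_ ?_
      · simp only
        group
      · simp only
        have : (s i = t) ↔ (t = s i) := eq_comm
        by_cases hc : t = s i
        · rw [if_pos hc, if_pos (this.mpr hc)]
          ring
        · rw [if_neg hc, if_neg (fun hx => hc (this.mp hx))]
          ring

/-- Parity of the number of occurrences in the left inversion sequence only depends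
on the product of the word. -/
lemma par_leftInvSeq_eq {ω ω' : List B} (h : π ω = π ω') (t : W) :
    par t (cs.leftInvSeq ω) = par t (cs.leftInvSeq ω') := by
  have h1 := mu_wordProd cs ω t 0
  have h2 := mu_wordProd cs ω' t 0
  rw [h] at h1
  rw [h1] at h2
  have := congrArg Prod.snd h2
  simpa using this

/-- The (simple) left exchange property. -/
lemma mem_leftInvSeq_of_simple_descent {ω : List B} (hr : cs.IsReduced ω) (i : B)
    (h : ℓ (s i * π ω) < ℓ (π ω)) : s i ∈ cs.leftInvSeq ω := by
  obtain ⟨ρ, hρr, hρ⟩ := cs.exists_reduced_word' (s i * π ω)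
  have hπ : π (i :: ρ) = π ω := by
    rw [cs.wordProd_cons, ← hρ, ← mul_assoc, cs.simple_mul_simple_self, one_mul]
  have hpar : par (s i) (cs.leftInvSeq (i :: ρ)) = 1 := by
    rw [leftInvSeq]
    rw [par_cons, if_pos rfl, par_map_conj, cs.inv_simple]
    rw [show s i * s i * s i = s i by rw [cs.simple_mul_simple_self, one_mul]]
    have : s i ∉ cs.leftInvSeq ρ := by
      intro hmem
      have hinv := cs.isLeftInversion_of_mem_leftInvSeq hρr hmem
      have := hinv.2
      rw [← hρ, ← mul_assoc, cs.simple_mul_simple_self, one_mul] at this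
      omega
    rw [par_eq_zero_of_not_mem this, add_zero]
  have : par (s i) (cs.leftInvSeq ω) = 1 := by
    rw [← par_leftInvSeq_eq cs hπ]
    exact hpar
  apply mem_of_par_ne_zero
  rw [this]
  decide

/-- Left exchange, `eraseIdx` form. -/
lemma leftExchange {ω : List B} (hr : cs.IsReduced ω) {i : B}
    (h : ℓ (s i * π ω) < ℓ (π ω)) :
    ∃ j < ω.length, s i * π ω = π (ω.eraseIdx j) := by
  have hmem := mem_leftInvSeq_of_simple_descent cs hr i h
  obtain ⟨j, hj, hget⟩ := List.mem_iff_getElem.mp hmem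
  rw [cs.length_leftInvSeq] at hj
  refine ⟨j, hj, ?_⟩
  rw [← cs.getD_leftInvSeq_mul_wordProd ω j]
  congr 1
  rw [List.getD_eq_getElem _ 1 (by rw [cs.length_leftInvSeq]; exact hj)]
  exact hget.symm

/-- Right exchange, weak form. -/
lemma rightExchange {ω : List B} (hr : cs.IsReduced ω) {i : B}
    (h : ℓ (π ω * s i) < ℓ (π ω)) :
    ∃ ω' : List B, (∀ b ∈ ω', b ∈ ω) ∧ ω'.length + 1 = ω.length ∧ π ω * s i = π ω' := by
  have hrrev : cs.IsReduced ω.reverse := (cs.isReduced_reverse_iff ω).mpr hr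
  have hlen : ℓ (s i * π ω.reverse) < ℓ (π ω.reverse) := by
    rw [cs.wordProd_reverse]
    have h1 : s i * (π ω)⁻¹ = (π ω * s i)⁻¹ := by
      rw [mul_inv_rev, cs.inv_simple]
    rw [h1, cs.length_inv, cs.length_inv]
    exact h
  obtain ⟨j, hj, heq⟩ := leftExchange cs hrrev hlen
  rw [List.length_reverse] at hj
  refine ⟨(ω.reverse.eraseIdx j).reverse, ?_, ?_, ?_⟩
  · intro b hb
    rw [List.mem_reverse] at hb
    have := List.eraseIdx_subset hb
    rwa [List.mem_reverse] at this
  · rw [List.length_reverse, List.length_eraseIdx_add_one (by rwa [List.length_reverse])]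
    exact List.length_reverse
  · rw [cs.wordProd_reverse]
    rw [cs.wordProd_reverse] at heq
    have := congrArg (fun z => z⁻¹) heq
    simp only [mul_inv_rev, inv_inv, cs.inv_simple] at this
    rw [← this]

/-! ### Parabolic subgroups and words -/

lemma simple_mem_WP {K : Set B} {i : B} (hi : i ∈ K) : s i ∈ WP cs K :=
  Subgroup.subset_closure ⟨i, hi, rfl⟩

lemma wordProd_mem_WP {K : Set B} {ω : List B} (hω : ∀ j ∈ ω, j ∈ K) :
    π ω ∈ WP cs K := by
  induction ω with
  | nil => simp [cs.wordProd_nil]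
  | cons i ω ih =>
      rw [cs.wordProd_cons]
      exact Subgroup.mul_mem _ (simple_mem_WP cs (hω i (List.mem_cons_self)))
        (ih (fun j hj => hω j (List.mem_cons_of_mem _ hj)))

lemma exists_word_of_mem_WP {K : Set B} {a : W} (ha : a ∈ WP cs K) :
    ∃ ω : List B, (∀ j ∈ ω, j ∈ K) ∧ π ω = a := by
  induction ha using Subgroup.closure_induction with
  | mem x hx =>
      obtain ⟨i, hi, rfl⟩ := hx
      exact ⟨[i], by simpa using hi, cs.wordProd_singleton i⟩
  | one => exact ⟨[], by simp, cs.wordProd_nil⟩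
  | mul x y _ _ hx hy =>
      obtain ⟨ω₁, h1, rfl⟩ := hx
      obtain ⟨ω₂, h2, rfl⟩ := hy
      exact ⟨ω₁ ++ ω₂, fun j hj => ((List.mem_append.mp hj).elim (h1 j) (h2 j)),
        cs.wordProd_append ω₁ ω₂⟩
  | inv x _ hx =>
      obtain ⟨ω, h1, rfl⟩ := hx
      exact ⟨ω.reverse, fun j hj => h1 j (List.mem_reverse.mp hj), cs.wordProd_reverse ω⟩

lemma exists_reduced_word_of_mem_WP {K : Set B} {a : W} (ha : a ∈ WP cs K) :
    ∃ ω : List B, (∀ j ∈ ω, j ∈ K) ∧ cs.IsReduced ω ∧ π ω = a := by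
  obtain ⟨ω, hωK, rfl⟩ := exists_word_of_mem_WP cs ha
  clear ha
  suffices H : ∀ (n : ℕ) (ω : List B), ω.length = n → (∀ j ∈ ω, j ∈ K) →
      ∃ ω' : List B, (∀ j ∈ ω', j ∈ K) ∧ cs.IsReduced ω' ∧ π ω' = π ω by
    exact H ω.length ω rfl hωK
  intro n
  induction n using Nat.strong_induction_on with
  | _ n ih =>
  intro ω hn hωK
  subst hn
  by_cases hred : cs.IsReduced ω
  · exact ⟨ω, hωK, hred, rfl⟩
  · -- find a shorter word in the letters of K
    have hne : ω ≠ [] := by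
      rintro rfl
      exact hred (by simp [CoxeterSystem.IsReduced])
    have hexists : ∃ k, ¬ cs.IsReduced (ω.take (k + 1)) := by
      refine ⟨ω.length - 1, ?_⟩
      rw [Nat.sub_add_cancel (by
        cases ω with
        | nil => exact absurd rfl hne
        | cons x l => simp)]
      rwa [List.take_length]
    classical
    set k₀ := Nat.find hexists with hk₀def
    have hk₀ : ¬ cs.IsReduced (ω.take (k₀ + 1)) := Nat.find_spec hexists
    have hk₀red : cs.IsReduced (ω.take k₀) := by
      rcases Nat.eq_zero_or_pos k₀ with h0 | hpos
      · rw [h0]; simp [CoxeterSystem.IsReduced]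
      · have hfm := Nat.find_min hexists (m := k₀ - 1) (by omega)
        rw [show k₀ - 1 + 1 = k₀ from by omega] at hfm
        exact not_not.mp hfm
    have hk₀lt : k₀ < ω.length := by
      by_contra hge
      push_neg at hge
      rw [List.take_of_length_le (by omega)] at hk₀
      exact hk₀ ((cs.isReduced_reverse_iff ω).mp ((cs.isReduced_reverse_iff ω).mpr (by
        rwa [List.take_of_length_le (by omega)] at hk₀red)))
    -- the (k₀+1)-prefix: take k₀ ++ [ω[k₀]]
    have htake : ω.take (k₀ + 1) = ω.take k₀ ++ [ω.get ⟨k₀, hk₀lt⟩] := by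
      rw [List.take_succ]
      congr 1
      simp [List.getElem?_eq_getElem hk₀lt]
    set i := ω.get ⟨k₀, hk₀lt⟩ with hidef
    have hπtake : π (ω.take (k₀ + 1)) = π (ω.take k₀) * s i := by
      rw [htake, cs.wordProd_append, cs.wordProd_singleton]
    have hlen_take : (ω.take k₀).length = k₀ := by
      rw [List.length_take]; omega
    have hvlen : ℓ (π (ω.take k₀)) = k₀ := by
      rw [hk₀red, hlen_take]
    have hdesc : ℓ (π (ω.take k₀) * s i) < ℓ (π (ω.take k₀)) := by
      rcases cs.length_mul_simple (π (ω.take k₀)) i with hup | hdown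
      · exfalso
        apply hk₀
        unfold CoxeterSystem.IsReduced
        rw [hπtake, hup, hvlen, List.length_take]
        omega
      · omega
    obtain ⟨ω₂, hω₂mem, hω₂len, hω₂⟩ := rightExchange cs hk₀red hdesc
    -- new word
    have hnew : π (ω₂ ++ ω.drop (k₀ + 1)) = π ω := by
      rw [cs.wordProd_append, ← hω₂, ← hπtake, ← cs.wordProd_append, List.take_append_drop]
    have hnewK : ∀ j ∈ ω₂ ++ ω.drop (k₀ + 1), j ∈ K := by
      intro j hj
      rcases List.mem_append.mp hj with h | h
      · exact hωK j (List.mem_of_mem_take (hω₂mem j h))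
      · exact hωK j (List.mem_of_mem_drop h)
    have hnewlen : (ω₂ ++ ω.drop (k₀ + 1)).length < ω.length := by
      rw [List.length_append, List.length_drop]
      rw [hlen_take] at hω₂len
      omega
    obtain ⟨ω', h1, h2, h3⟩ := ih _ hnewlen _ rfl hnewK
    exact ⟨ω', h1, h2, by rw [h3, hnew]⟩

lemma WP_mono {K K' : Set B} (h : K ⊆ K') : WP cs K ≤ WP cs K' :=
  Subgroup.closure_mono (Set.image_mono h)

lemma simple_of_mem_WP_length_one {K : Set B} {t : W} (ht : t ∈ WP cs K)
    (hl : ℓ t = 1) : ∃ q ∈ K, t = s q := by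
  obtain ⟨ω, hωK, hred, rfl⟩ := exists_reduced_word_of_mem_WP cs ht
  have : ω.length = 1 := by rw [← hred]; exact hl
  obtain ⟨q, rfl⟩ := List.length_eq_one_iff.mp this
  exact ⟨q, hωK q (List.mem_cons_self), cs.wordProd_singleton q⟩

lemma simple_ne_one (i : B) : s i ≠ 1 := by
  intro h
  have := cs.length_simple i
  rw [h, cs.length_one] at this
  omega

/-! ### Length additivity on cosets -/

lemma addL_aux {K : Set B} {d : W} (hmin : ∀ a ∈ WP cs K, ℓ d ≤ ℓ (a * d)) :
    ∀ ω : List B, (∀ j ∈ ω, j ∈ K) → cs.IsReduced ω → ℓ (π ω * d) = ω.length + ℓ d := by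
  intro ω
  induction ω with
  | nil => simp
  | cons i ω' ih =>
      intro hK hred
      have hω'red : cs.IsReduced ω' := by
        have := hred.drop 1
        simpa using this
      have hω'K : ∀ j ∈ ω', j ∈ K := fun j hj => hK j (List.mem_cons_of_mem _ hj)
      have hIH : ℓ (π ω' * d) = ω'.length + ℓ d := ih hω'K hω'red
      rw [cs.wordProd_cons, mul_assoc]
      rcases cs.length_simple_mul (π ω' * d) i with hup | hdown
      · rw [hup, hIH]
        simp [List.length_cons]
        omega
      · -- descent case: contradiction
        exfalso
        obtain ⟨ρ, hρred, hρ⟩ := cs.exists_reduced_word' d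
        have hπ : π (ω' ++ ρ) = π ω' * d := by rw [cs.wordProd_append, ← hρ]
        have happred : cs.IsReduced (ω' ++ ρ) := by
          unfold CoxeterSystem.IsReduced
          rw [hπ, hIH, List.length_append, ← hρred, ← hρ]
        have hdesc : ℓ (s i * π (ω' ++ ρ)) < ℓ (π (ω' ++ ρ)) := by
          rw [hπ]; omega
        obtain ⟨j, hj, hex⟩ := leftExchange cs happred hdesc
        rw [hπ] at hex
        rcases lt_or_ge j ω'.length with hlt | hle
        · rw [List.eraseIdx_append_of_lt_length hlt] at hex
          rw [cs.wordProd_append] at hex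
          have hcancel : s i * π ω' = π (ω'.eraseIdx j) := by
            have := mul_right_cancel (a := s i * π ω' ) (b := d) (c := π (ω'.eraseIdx j))
            apply this
            rw [← mul_assoc] at hex
            rw [← hρ] at hex
            exact hex
          have h1 : ℓ (s i * π ω') ≤ (ω'.eraseIdx j).length := by
            rw [hcancel]; exact cs.length_wordProd_le _
          have h2 : (ω'.eraseIdx j).length + 1 = ω'.length :=
            List.length_eraseIdx_add_one hlt
          have h3 : ℓ (s i * π ω') = ω'.length + 1 := by
            have : ℓ (π (i :: ω')) = (i :: ω').length := hred
            rw [cs.wordProd_cons] at this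
            rw [this, List.length_cons]
          omega
        · rw [List.eraseIdx_append_of_length_le hle] at hex
          rw [cs.wordProd_append] at hex
          set t := (π ω')⁻¹ * s i * π ω' with htdef
          have htK : t ∈ WP cs K := by
            refine Subgroup.mul_mem _ (Subgroup.mul_mem _ (Subgroup.inv_mem _ ?_) ?_) ?_
            · exact wordProd_mem_WP cs hω'K
            · exact simple_mem_WP cs (hK i (List.mem_cons_self))
            · exact wordProd_mem_WP cs hω'K
          have htd : t * d = π (ρ.eraseIdx (j - ω'.length)) := by
            rw [htdef, mul_assoc, mul_assoc, hex]
            group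
          have hjρ : j - ω'.length < ρ.length := by
            rw [List.length_append] at hj
            omega
          have h1 : ℓ (t * d) ≤ (ρ.eraseIdx (j - ω'.length)).length := by
            rw [htd]; exact cs.length_wordProd_le _
          have h2 : (ρ.eraseIdx (j - ω'.length)).length + 1 = ρ.length :=
            List.length_eraseIdx_add_one hjρ
          have h3 : ℓ d ≤ ℓ (t * d) := hmin t htK
          have h4 : ρ.length = ℓ d := by rw [← hρred, ← hρ]
          omega

lemma addL {K : Set B} {d : W} (hmin : ∀ a ∈ WP cs K, ℓ d ≤ ℓ (a * d)) :
    ∀ a ∈ WP cs K, ℓ (a * d) = ℓ a + ℓ d := by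
  intro a ha
  obtain ⟨ω, hωK, hred, rfl⟩ := exists_reduced_word_of_mem_WP cs ha
  rw [addL_aux cs hmin ω hωK hred, hred]

lemma addR {K : Set B} {d : W} (hmin : ∀ b ∈ WP cs K, ℓ d ≤ ℓ (d * b)) :
    ∀ b ∈ WP cs K, ℓ (d * b) = ℓ d + ℓ b := by
  intro b hb
  have hmin' : ∀ a ∈ WP cs K, ℓ d⁻¹ ≤ ℓ (a * d⁻¹) := by
    intro a ha
    have : a * d⁻¹ = (d * a⁻¹)⁻¹ := by group
    rw [this, cs.length_inv, cs.length_inv]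
    exact hmin a⁻¹ (Subgroup.inv_mem _ ha)
  have := addL cs hmin' b⁻¹ (Subgroup.inv_mem _ hb)
  have heq : b⁻¹ * d⁻¹ = (d * b)⁻¹ := by group
  rw [heq, cs.length_inv, cs.length_inv, cs.length_inv] at this
  omega

/-! ### Minimal coset representatives -/

lemma minL_of_no_descent {K : Set B} {d : W} (h : ∀ i ∈ K, ℓ d < ℓ (s i * d)) :
    ∀ a ∈ WP cs K, ℓ d ≤ ℓ (a * d) := by
  -- take an element of minimal length in the coset
  have hex : ∃ m, ∃ a ∈ WP cs K, ℓ (a * d) = m := ⟨ℓ d, 1, Subgroup.one_mem _, by rw [one_mul]⟩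
  classical
  obtain ⟨a₀, ha₀, ha₀len⟩ := Nat.find_spec hex
  set d₀ := a₀ * d with hd₀def
  have hmin₀ : ∀ a ∈ WP cs K, ℓ d₀ ≤ ℓ (a * d₀) := by
    intro a ha
    have : a * d₀ = (a * a₀) * d := by rw [hd₀def]; group
    rw [this, ha₀len]
    exact Nat.find_min' hex ⟨a * a₀, Subgroup.mul_mem _ ha ha₀, rfl⟩
  have hadd₀ := addL cs hmin₀
  -- show a₀⁻¹ = 1
  have hd : d = a₀⁻¹ * d₀ := by rw [hd₀def]; group
  have hlen : ℓ d = ℓ a₀⁻¹ + ℓ d₀ := by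
    rw [hd]
    exact hadd₀ a₀⁻¹ (Subgroup.inv_mem _ ha₀)
  by_cases h0 : ℓ a₀⁻¹ = 0
  · have : a₀⁻¹ = 1 := cs.length_eq_zero_iff.mp h0
    intro a ha
    have hdd : d = d₀ := by rw [hd, this, one_mul]
    rw [hdd]
    exact hmin₀ a ha
  · exfalso
    obtain ⟨ω, hωK, hred, hπω⟩ := exists_reduced_word_of_mem_WP cs (Subgroup.inv_mem _ ha₀)
    cases ω with
    | nil =>
        apply h0
        rw [← hπω]
        simp
    | cons i ω' =>
        have hi : i ∈ K := hωK i (List.mem_cons_self)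
        have hω'red : cs.IsReduced ω' := by
          have := hred.drop 1
          simpa using this
        have hω'K : ∀ j ∈ ω', j ∈ K := fun j hj => hωK j (List.mem_cons_of_mem _ hj)
        have h1 : ℓ d = (i :: ω').length + ℓ d₀ := by
          rw [hlen, ← hπω, hred]
        have h2 : s i * d = π ω' * d₀ := by
          rw [hd, ← hπω, cs.wordProd_cons]
          group
          rw [cs.simple_mul_simple_self, one_mul]
        have h3 : ℓ (s i * d) = ω'.length + ℓ d₀ := by
          rw [h2, addL_aux cs hmin₀ ω' hω'K hω'red]
        have := h i hi
        rw [h1, h3, List.length_cons] at this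
        omega

lemma minR_of_no_descent {K : Set B} {d : W} (h : ∀ i ∈ K, ℓ d < ℓ (d * s i)) :
    ∀ b ∈ WP cs K, ℓ d ≤ ℓ (d * b) := by
  have h' : ∀ i ∈ K, ℓ d⁻¹ < ℓ (s i * d⁻¹) := by
    intro i hi
    have : s i * d⁻¹ = (d * s i)⁻¹ := by rw [mul_inv_rev, cs.inv_simple]
    rw [this, cs.length_inv, cs.length_inv]
    exact h i hi
  intro b hb
  have := minL_of_no_descent cs h' b⁻¹ (Subgroup.inv_mem _ hb)
  have heq : b⁻¹ * d⁻¹ = (d * b)⁻¹ := by group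
  rw [heq, cs.length_inv, cs.length_inv] at this
  exact this

lemma minL_le {K : Set B} {d : W} (h : IsMinL cs K d) :
    ∀ a ∈ WP cs K, ℓ d ≤ ℓ (a * d) := by
  intro a ha
  by_cases had : a * d = d
  · rw [had]
  · exact le_of_lt (h a ha had)

lemma minR_le {K : Set B} {d : W} (h : IsMinR cs K d) :
    ∀ b ∈ WP cs K, ℓ d ≤ ℓ (d * b) := by
  intro b hb
  by_cases hbd : d * b = d
  · rw [hbd]
  · exact le_of_lt (h b hb hbd)

lemma isMinL_of_le {K : Set B} {d : W} (h : ∀ a ∈ WP cs K, ℓ d ≤ ℓ (a * d)) :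
    IsMinL cs K d := by
  intro a ha hne
  have := addL cs h a ha
  have h0 : ℓ a ≠ 0 := by
    intro h0
    exact hne (by rw [cs.length_eq_zero_iff.mp h0, one_mul])
  omega

lemma isMinR_of_le {K : Set B} {d : W} (h : ∀ b ∈ WP cs K, ℓ d ≤ ℓ (d * b)) :
    IsMinR cs K d := by
  intro b hb hne
  have := addR cs h b hb
  have h0 : ℓ b ≠ 0 := by
    intro h0
    exact hne (by rw [cs.length_eq_zero_iff.mp h0, mul_one])
  omega

/-! ### Deodhar's lemma and double cosets -/

lemma deodhar {L : Set B} {u : W} (hu : ∀ b ∈ WP cs L, ℓ u ≤ ℓ (u * b)) (i : B)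
    (hl : ℓ u < ℓ (s i * u)) :
    (∀ b ∈ WP cs L, ℓ (s i * u) ≤ ℓ (s i * u * b)) ∨ (∃ k ∈ L, s i * u = u * s k) := by
  by_cases hall : ∀ k ∈ L, ℓ (s i * u) < ℓ (s i * u * s k)
  · exact Or.inl (minR_of_no_descent cs hall)
  · right
    push_neg at hall
    obtain ⟨k, hk, hklen⟩ := hall
    refine ⟨k, hk, ?_⟩
    have hne : ℓ (s i * u * s k) ≠ ℓ (s i * u) := cs.length_mul_simple_ne _ k
    have hdown : ℓ (s i * u * s k) < ℓ (s i * u) := by omega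
    have hsiu : ℓ (s i * u) = ℓ u + 1 := by
      rcases cs.length_simple_mul u i with h' | h' <;> omega
    have husk : ℓ (u * s k) = ℓ u + 1 := by
      have h1 : ℓ u ≤ ℓ (u * s k) := hu (s k) (simple_mem_WP cs hk)
      have h2 : ℓ (u * s k) ≠ ℓ u := cs.length_mul_simple_ne u k
      rcases cs.length_mul_simple u k with h' | h' <;> omega
    obtain ⟨ρ, hρred, hρ⟩ := cs.exists_reduced_word' u
    have hcat : π (ρ ++ [k]) = u * s k := by
      rw [cs.wordProd_append, cs.wordProd_singleton, ← hρ]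
    have hcatred : cs.IsReduced (ρ ++ [k]) := by
      unfold CoxeterSystem.IsReduced
      rw [hcat, husk, List.length_append, List.length_singleton, ← hρred, ← hρ]
    have hdesc : ℓ (s i * π (ρ ++ [k])) < ℓ (π (ρ ++ [k])) := by
      rw [hcat, husk]
      have : s i * (u * s k) = s i * u * s k := by group
      rw [this]
      omega
    obtain ⟨j, hj, hex⟩ := leftExchange cs hcatred hdesc
    rw [hcat] at hex
    rcases lt_or_ge j ρ.length with hlt | hle
    · exfalso
      rw [List.eraseIdx_append_of_lt_length hlt, cs.wordProd_append,
        cs.wordProd_singleton] at hex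
      have hcancel : s i * u = π (ρ.eraseIdx j) := by
        apply mul_right_cancel (b := s k)
        rw [← hex]
        group
      have h1 : ℓ (s i * u) ≤ (ρ.eraseIdx j).length := by
        rw [hcancel]; exact cs.length_wordProd_le _
      have h2 : (ρ.eraseIdx j).length + 1 = ρ.length := List.length_eraseIdx_add_one hlt
      have h3 : ρ.length = ℓ u := by rw [← hρred, ← hρ]
      omega
    · rw [List.eraseIdx_append_of_length_le hle] at hex
      have hj0 : j - ρ.length = 0 := by
        rw [List.length_append, List.length_singleton] at hj
        omega
      rw [hj0] at hex
      simp only [List.eraseIdx_cons_zero, List.append_nil] at hex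
      rw [← hρ] at hex
      have := congrArg (fun z => z * s k) hex
      rw [mul_assoc, mul_assoc u (s k) (s k), cs.simple_mul_simple_self, mul_one] at this
      exact this

lemma claimV {K L : Set B} {d : W} (hdR : ∀ b ∈ WP cs L, ℓ d ≤ ℓ (d * b)) :
    ∀ ω : List B, (∀ j ∈ ω, j ∈ K) → ∀ b ∈ WP cs L,
    ∃ α ∈ WP cs K, ∃ v ∈ WP cs L, π ω * d * b = α * d * v ∧
      (∀ c ∈ WP cs L, ℓ (α * d) ≤ ℓ (α * d * c)) := by
  intro ω
  induction ω with
  | nil =>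
      intro _ b hb
      exact ⟨1, Subgroup.one_mem _, b, hb, by simp, by simpa using hdR⟩
  | cons i ω' ih =>
      intro hK b hb
      obtain ⟨α', hα', v', hv', heq, hmin⟩ :=
        ih (fun j hj => hK j (List.mem_cons_of_mem _ hj)) b hb
      have hi : i ∈ K := hK i (List.mem_cons_self)
      have hcons : π (i :: ω') * d * b = s i * (α' * d) * v' := by
        rw [cs.wordProd_cons, mul_assoc, mul_assoc, ← mul_assoc (π ω') d b, heq]
        group
      have hne : ℓ (s i * (α' * d)) ≠ ℓ (α' * d) := cs.length_simple_mul_ne _ i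
      rcases lt_or_gt_of_ne hne with hlt | hgt
      · -- descent: s i * (α' d) still right-minimal
        refine ⟨s i * α', Subgroup.mul_mem _ (simple_mem_WP cs hi) hα', v', hv', ?_, ?_⟩
        · rw [hcons]; group
        · intro c hc
          have haddR := addR cs hmin
          have h1 : ℓ (α' * d * c) = ℓ (α' * d) + ℓ c := haddR c hc
          have h2 : ℓ (α' * d * c) ≤ ℓ (s i * (α' * d) * c) + 1 := by
            have h3 : α' * d * c = s i * (s i * (α' * d) * c) := by
              rw [show s i * (s i * (α' * d) * c) = (s i * s i) * (α' * d * c) from by group,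
                cs.simple_mul_simple_self, one_mul]
            rw [h3]
            rcases cs.length_simple_mul (s i * (α' * d) * c) i with h' | h' <;> omega
          have h4 : s i * α' * d = s i * (α' * d) := by group
          rw [h4]
          omega
      · rcases deodhar cs hmin i hgt with hR | ⟨k, hk, hmove⟩
        · refine ⟨s i * α', Subgroup.mul_mem _ (simple_mem_WP cs hi) hα', v', hv', ?_, ?_⟩
          · rw [hcons]; group
          · intro c hc
            have h4 : s i * α' * d = s i * (α' * d) := by group
            rw [h4]
            have := hR c hc
            rw [show s i * (α' * d) * c = s i * (α' * d) * c from rfl] at this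
            exact this
        · refine ⟨α', hα', s k * v', Subgroup.mul_mem _ (simple_mem_WP cs hk) hv', ?_, hmin⟩
          rw [hcons, hmove]
          group

/-- The key double coset lemma: an element that is both left-`K`-minimal and
right-`L`-minimal is the unique minimal element of its `(W_K, W_L)` double coset. -/
lemma isMinDC_of_isMinL_isMinR {K L : Set B} {x : W}
    (hL : IsMinL cs K x) (hR : IsMinR cs L x) : IsMinDC cs K L x := by
  have main : ∀ m, ∀ a ∈ WP cs K, ∀ b ∈ WP cs L, ℓ (a * x * b) = m →
      a * x * b ≠ x → ℓ x < ℓ (a * x * b) := by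
    intro m
    induction m using Nat.strong_induction_on with
    | _ m ihm =>
    intro a ha b hb hm hne
    by_cases hKd : ∃ i ∈ K, ℓ (s i * (a * x * b)) < ℓ (a * x * b)
    · obtain ⟨i, hi, hdesc⟩ := hKd
      have hmem : s i * (a * x * b) = (s i * a) * x * b := by group
      by_cases hx : s i * (a * x * b) = x
      · -- a*x*b = s i * x
        have h1 : a * x * b = s i * x := by
          have h2 := congrArg (fun z => s i * z) hx
          rw [← mul_assoc, cs.simple_mul_simple_self, one_mul] at h2
          exact h2
        rw [h1]
        apply hL (s i) (simple_mem_WP cs hi)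
        intro hcontra
        exact simple_ne_one cs i (by rwa [mul_eq_right] at hcontra)
      · have := ihm (ℓ (s i * (a * x * b))) (by omega) (s i * a)
          (Subgroup.mul_mem _ (simple_mem_WP cs hi) ha) b hb (by rw [← hmem]) (by rw [← hmem]; exact hx)
        rw [← hmem] at this
        omega
    · by_cases hLd : ∃ k ∈ L, ℓ ((a * x * b) * s k) < ℓ (a * x * b)
      · obtain ⟨k, hk, hdesc⟩ := hLd
        have hmem : (a * x * b) * s k = a * x * (b * s k) := by group
        by_cases hx : (a * x * b) * s k = x
        · have h1 : a * x * b = x * s k := by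
            have h2 := congrArg (fun z => z * s k) hx
            rw [mul_assoc (a * x * b) (s k) (s k), cs.simple_mul_simple_self, mul_one] at h2
            exact h2
          rw [h1]
          apply hR (s k) (simple_mem_WP cs hk)
          intro hcontra
          exact simple_ne_one cs k (by rwa [mul_eq_left] at hcontra)
        · have := ihm (ℓ ((a * x * b) * s k)) (by omega) a ha (b * s k)
            (Subgroup.mul_mem _ hb (simple_mem_WP cs hk)) (by rw [← hmem]) (by rw [← hmem]; exact hx)
          rw [← hmem] at this
          omega
      · -- no descents: the element is bi-minimal, hence equals x
        exfalso
        push_neg at hKd hLd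
        set w := a * x * b with hwdef
        have hwL : ∀ a' ∈ WP cs K, ℓ w ≤ ℓ (a' * w) := by
          apply minL_of_no_descent
          intro i hi
          have h1 := hKd i hi
          have h2 := cs.length_simple_mul_ne w i
          omega
        have hwR : ∀ b' ∈ WP cs L, ℓ w ≤ ℓ (w * b') := by
          apply minR_of_no_descent
          intro k hk
          have h1 := hLd k hk
          have h2 := cs.length_mul_simple_ne w k
          omega
        obtain ⟨ω, hωK, hωred, hπω⟩ := exists_reduced_word_of_mem_WP cs ha
        obtain ⟨α, hα, v, hv, heq, hαdmin⟩ :=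
          claimV cs (minR_le cs hR) ω hωK b hb
        rw [hπω] at heq
        -- w = α * x * v with α*x right-L-minimal; w is right-L-minimal;
        -- same right coset ⇒ v = 1
        have haddαx := addR cs hαdmin
        have haddw := addR cs hwR
        have h1 : ℓ w = ℓ (α * x) + ℓ v := by
          rw [hwdef, heq]
          exact haddαx v hv
        have h2 : α * x = w * v⁻¹ := by rw [hwdef, heq]; group
        have h3 : ℓ (α * x) = ℓ w + ℓ v⁻¹ := by
          rw [h2]
          exact haddw v⁻¹ (Subgroup.inv_mem _ hv)
        have hv1 : v = 1 := by
          rw [cs.length_inv] at h3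
          have : ℓ v = 0 := by omega
          exact cs.length_eq_zero_iff.mp this
        have hwαx : w = α * x := by rw [hwdef, heq, hv1, mul_one]
        -- now both w and x are left-K-minimal in the same left coset
        have haddx := addL cs (minL_le cs hL)
        have haddw' := addL cs hwL
        have h4 : ℓ w = ℓ α + ℓ x := by rw [hwαx]; exact haddx α hα
        have h5 : x = α⁻¹ * w := by rw [hwαx]; group
        have h6 : ℓ x = ℓ α⁻¹ + ℓ w := by rw [h5]; exact haddw' α⁻¹ (Subgroup.inv_mem _ hα)
        have hα1 : α = 1 := by
          rw [cs.length_inv] at h6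
          have : ℓ α = 0 := by omega
          exact cs.length_eq_zero_iff.mp this
        exact hne (hwαx.trans (by rw [hα1, one_mul]))
  intro a ha b hb hne
  exact main (ℓ (a * x * b)) a ha b hb rfl hne

/-! ### The main induction -/

lemma pr_zero (u : ℕ → W) : pr u 0 = 1 := rfl

lemma pr_succ (u : ℕ → W) (n : ℕ) : pr u (n + 1) = pr u n * u n := by
  unfold pr
  rw [List.range_succ, List.map_append, List.prod_append]
  simp

lemma Jn_le {f : B ≃ B} {J : Set B} (sq : SSeq cs f J) :
    ∀ n m : ℕ, n ≤ m → sq.Jn m ⊆ sq.Jn n := by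
  intro n m h
  induction m, h using Nat.le_induction with
  | base => exact fun _ h => h
  | succ m hm ih => exact fun j hj => ih (sq.hmono m hj)

lemma coset_tail {f : B ≃ B} {J : Set B} (sq : SSeq cs f J) :
    ∀ n m : ℕ, n ≤ m → ∃ c ∈ WP cs (sq.Jn n), pr sq.u (m + 1) = pr sq.u (n + 1) * c := by
  intro n m h
  induction m, h using Nat.le_induction with
  | base => exact ⟨1, Subgroup.one_mem _, by rw [mul_one]⟩
  | succ m hm ih =>
      obtain ⟨c, hc, heq⟩ := ih
      refine ⟨c * sq.u (m + 1), Subgroup.mul_mem _ hc ?_, ?_⟩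
      · exact WP_mono cs (Jn_le cs sq n m hm) (sq.hd m)
      · rw [pr_succ, heq]
        group

lemma pr_stab {f : B ≃ B} {J : Set B} (sq : SSeq cs f J) (N : ℕ)
    (hN : ∀ m, N < m → sq.u m = 1) :
    ∀ m : ℕ, N ≤ m → pr sq.u (m + 1) = pr sq.u (N + 1) := by
  intro m h
  induction m, h using Nat.le_induction with
  | base => rfl
  | succ m hm ih =>
      rw [pr_succ, hN (m + 1) (by omega), mul_one]
      exact ih

lemma key {f : B ≃ B} {J : Set B} (sq : SSeq cs f J) : ∀ n : ℕ,
    IsMinL cs (f '' J) (pr sq.u (n + 1)) ∧ IsMinR cs (sq.Jn n) (pr sq.u (n + 1)) ∧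
    (∀ q ∈ sq.Jn n, ∀ p ∈ f '' J,
      cs.simple p = pr sq.u (n + 1) * cs.simple q * (pr sq.u (n + 1))⁻¹ → p ∈ f '' sq.Jn n) := by
  intro n
  induction n with
  | zero =>
      have h1 : pr sq.u 1 = sq.u 0 := by rw [pr_succ, pr_zero, one_mul]
      refine ⟨?_, ?_, ?_⟩
      · rw [h1, ← sq.hJ'0]; exact (sq.he 0).1
      · rw [h1]; exact (sq.he 0).2
      · intro q hq p hp _
        rw [sq.hJ0]
        exact hp
  | succ n ih =>
      obtain ⟨IHa, IHb, IHc⟩ := ih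
      have huP : sq.u (n + 1) ∈ WP cs (sq.Jn n) := sq.hd n
      have mR : ∀ b ∈ WP cs (sq.Jn n), ℓ (pr sq.u (n+1)) ≤ ℓ (pr sq.u (n+1) * b) :=
        minR_le cs IHb
      have haddR := addR cs mR
      have hx' : pr sq.u (n + 1 + 1) = pr sq.u (n + 1) * sq.u (n + 1) := pr_succ _ _
      have hlx' : ℓ (pr sq.u (n + 1 + 1)) = ℓ (pr sq.u (n+1)) + ℓ (sq.u (n+1)) := by
        rw [hx']
        exact haddR _ huP
      -- a helper: the length of s p * x for p ∈ f '' J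
      have hspx : ∀ p ∈ f '' J, ℓ (cs.simple p * pr sq.u (n+1)) = ℓ (pr sq.u (n+1)) + 1 := by
        intro p hp
        have hne : cs.simple p * pr sq.u (n+1) ≠ pr sq.u (n+1) := by
          intro hcon
          exact simple_ne_one cs p (by rwa [mul_eq_right] at hcon)
        have := IHa (cs.simple p) (simple_mem_WP cs hp) hne
        rcases cs.length_simple_mul (pr sq.u (n+1)) p with h' | h' <;> omega
      -- (c) at n+1
      have hC : ∀ q ∈ sq.Jn (n+1), ∀ p ∈ f '' J,
          cs.simple p = pr sq.u (n + 1 + 1) * cs.simple q * (pr sq.u (n + 1 + 1))⁻¹ →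
          p ∈ f '' sq.Jn (n+1) := by
        intro q hq p hp hconj
        have hqn : q ∈ sq.Jn n := sq.hmono n hq
        set t := sq.u (n+1) * cs.simple q * (sq.u (n+1))⁻¹ with htdef
        have htK : t ∈ WP cs (sq.Jn n) :=
          Subgroup.mul_mem _ (Subgroup.mul_mem _ huP (simple_mem_WP cs hqn))
            (Subgroup.inv_mem _ huP)
        have hxt : pr sq.u (n+1) * t = cs.simple p * pr sq.u (n+1) := by
          rw [hconj, hx', htdef]
          group
        have hps : cs.simple p = pr sq.u (n+1) * t * (pr sq.u (n+1))⁻¹ := by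
          rw [hxt]
          group
        have hlt : ℓ t = 1 := by
          have h1 := haddR t htK
          rw [hxt, hspx p hp] at h1
          omega
        obtain ⟨q', hq', htq'⟩ := simple_of_mem_WP_length_one cs htK hlt
        have hpfJn : p ∈ f '' sq.Jn n := by
          apply IHc q' hq' p hp
          rw [← htq']
          exact hps
        rw [sq.hb n]
        refine ⟨hpfJn, ⟨q', hq', ?_⟩⟩
        rw [← htq']
        exact hps
      -- (a) at n+1
      have noDesc : ∀ p ∈ f '' J,
          ℓ (pr sq.u (n + 1 + 1)) < ℓ (cs.simple p * pr sq.u (n + 1 + 1)) := by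
        intro p hp
        by_contra hcon
        push_neg at hcon
        have hne := cs.length_simple_mul_ne (pr sq.u (n + 1 + 1)) p
        have hdesc : ℓ (cs.simple p * pr sq.u (n + 1 + 1)) < ℓ (pr sq.u (n + 1 + 1)) := by
          omega
        obtain ⟨ρ, hρred, hρ⟩ := cs.exists_reduced_word' (pr sq.u (n+1))
        obtain ⟨τ, hτK, hτred, hτ⟩ := exists_reduced_word_of_mem_WP cs huP
        have hπcat : π (ρ ++ τ) = pr sq.u (n + 1 + 1) := by
          rw [cs.wordProd_append, ← hρ, hτ, hx']
        have hcatred : cs.IsReduced (ρ ++ τ) := by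
          unfold CoxeterSystem.IsReduced
          rw [hπcat, hlx', List.length_append, ← hρred, ← hρ, ← hτred, hτ]
        have hdesc' : ℓ (cs.simple p * π (ρ ++ τ)) < ℓ (π (ρ ++ τ)) := by
          rw [hπcat]; exact hdesc
        obtain ⟨j, hj, hex⟩ := leftExchange cs hcatred hdesc'
        rw [hπcat] at hex
        rcases lt_or_ge j ρ.length with hlt | hle
        · rw [List.eraseIdx_append_of_lt_length hlt, cs.wordProd_append] at hex
          have hcancel : cs.simple p * pr sq.u (n+1) = π (ρ.eraseIdx j) := by
            apply mul_right_cancel (b := sq.u (n+1))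
            rw [← hτ, ← hex, hx', ← hτ]
            group
          have h1 : ℓ (cs.simple p * pr sq.u (n+1)) ≤ (ρ.eraseIdx j).length := by
            rw [hcancel]; exact cs.length_wordProd_le _
          have h2 : (ρ.eraseIdx j).length + 1 = ρ.length := List.length_eraseIdx_add_one hlt
          have h3 : ρ.length = ℓ (pr sq.u (n+1)) := by rw [← hρred, ← hρ]
          have h4 := hspx p hp
          omega
        · rw [List.eraseIdx_append_of_length_le hle, cs.wordProd_append] at hex
          have hjτ : j - ρ.length < τ.length := by
            rw [List.length_append] at hj
            omega
          set v := π (τ.eraseIdx (j - ρ.length)) with hvdef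
          have hvK : v ∈ WP cs (sq.Jn n) :=
            wordProd_mem_WP cs (fun j' hj' => hτK j' (List.eraseIdx_subset hj'))
          have hvlen : ℓ v + 1 ≤ ℓ (sq.u (n+1)) := by
            have h1 : ℓ v ≤ (τ.eraseIdx (j - ρ.length)).length := cs.length_wordProd_le _
            have h2 : (τ.eraseIdx (j - ρ.length)).length + 1 = τ.length :=
              List.length_eraseIdx_add_one hjτ
            have h3 : τ.length = ℓ (sq.u (n+1)) := by rw [← hτred, hτ]
            omega
          have hexv : cs.simple p * pr sq.u (n + 1 + 1) = pr sq.u (n+1) * v := by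
            rw [hex, ← hρ]
          set t := v * (sq.u (n+1))⁻¹ with htdef
          have htK : t ∈ WP cs (sq.Jn n) :=
            Subgroup.mul_mem _ hvK (Subgroup.inv_mem _ huP)
          have hxt : pr sq.u (n+1) * t = cs.simple p * pr sq.u (n+1) := by
            rw [htdef, ← mul_assoc, ← hexv, hx']
            group
          have hps : cs.simple p = pr sq.u (n+1) * t * (pr sq.u (n+1))⁻¹ := by
            rw [hxt]
            group
          have hlt1 : ℓ t = 1 := by
            have h1 := haddR t htK
            rw [hxt, hspx p hp] at h1
            omega
          obtain ⟨q, hq, htq⟩ := simple_of_mem_WP_length_one cs htK hlt1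
          have hqu : cs.simple q * sq.u (n+1) = v := by
            rw [← htq, htdef]
            group
          have hqlt : ℓ (cs.simple q * sq.u (n+1)) < ℓ (sq.u (n+1)) := by
            rw [hqu]; omega
          have hpJn : p ∈ f '' sq.Jn n := by
            apply IHc q hq p hp
            rw [← htq]
            exact hps
          have hqJ' : q ∈ sq.J'n (n + 1) := by
            rw [sq.hc n]
            refine ⟨hq, ⟨p, hpJn, ?_⟩⟩
            rw [inv_inv, hps, ← htq]
            group
          have hminu := (sq.he (n+1)).1 (cs.simple q) (simple_mem_WP cs hqJ')
          have hne2 : cs.simple q * sq.u (n+1) ≠ sq.u (n+1) := by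
            intro hcon2
            exact simple_ne_one cs q (by rwa [mul_eq_right] at hcon2)
          have := hminu hne2
          omega
      have mL' : ∀ a ∈ WP cs (f '' J), ℓ (pr sq.u (n + 1 + 1)) ≤ ℓ (a * pr sq.u (n + 1 + 1)) :=
        minL_of_no_descent cs noDesc
      refine ⟨isMinL_of_le cs mL', ?_, hC⟩
      -- (b) at n+1
      intro b hb hne
      have hbn : b ∈ WP cs (sq.Jn n) := WP_mono cs (sq.hmono n) hb
      have h1 : pr sq.u (n + 1 + 1) * b = pr sq.u (n+1) * (sq.u (n+1) * b) := by
        rw [hx']; group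
      have h2 : ℓ (pr sq.u (n+1) * (sq.u (n+1) * b)) =
          ℓ (pr sq.u (n+1)) + ℓ (sq.u (n+1) * b) :=
        haddR _ (Subgroup.mul_mem _ huP hbn)
      have h3 : sq.u (n+1) * b ≠ sq.u (n+1) := by
        intro hcon
        apply hne
        rw [hx', mul_assoc, hcon]
      have h4 := (sq.he (n+1)).2 b hb h3
      rw [h1, h2]
      omega

end Machinery

/-- 2.5(a): for `(J_n, J'_n, u_n) ∈ S(J, ε)` with `u_m = 1` for `m > N` and
`w = u_0 ⋯ u_N`, each partial product `u_0 u_1 ⋯ u_n` is the unique minimal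
length element of the double coset `W_{J'} w W_{J_n}`. -/
theorem statement6 (cs : CoxeterSystem M W) (f : B ≃ B) (e : W ≃* W)
    (hef : ∀ b, e (cs.simple b) = cs.simple (f b)) (J : Set B)
    (s : SSeq cs f J) (N : ℕ) (hN : ∀ m, N < m → s.u m = 1) :
    ∀ n, IsMinOf cs (f '' J) (s.Jn n) (pr s.u (N + 1)) (pr s.u (n + 1)) := by
  intro n
  obtain ⟨hA, hB, _⟩ := key cs s n
  have hc : ∃ c ∈ WP cs (s.Jn n), pr s.u (N + 1) = pr s.u (n + 1) * c := by
    rcases le_or_gt n N with h | h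
    · exact coset_tail cs s n N h
    · refine ⟨1, Subgroup.one_mem _, ?_⟩
      rw [mul_one]
      exact (pr_stab cs s N hN n (le_of_lt h)).symm
  obtain ⟨c, hcW, hwc⟩ := hc
  constructor
  · refine ⟨1, Subgroup.one_mem _, c⁻¹, Subgroup.inv_mem _ hcW, ?_⟩
    rw [hwc]
    group
  · intro a ha b hb hne
    have hDC := isMinDC_of_isMinL_isMinR cs hA hB
    have h1 : a * pr s.u (N + 1) * b = a * pr s.u (n + 1) * (c * b) := by
      rw [hwc]; group
    rw [h1] at hne ⊢
    exact hDC a ha (c * b) (Subgroup.mul_mem _ hcW hb) hne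

end Lusztig
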